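/- Tail estimate for the negative part (Lemma 2.2). Let n ≥ 1, s ∈ (0,1), let a : 𝕊^{n-1} → [0,∞) be bounded measurable with a ≤ Λ, let x₀ ∈ ℝⁿ, R > 0, and let u : ℝⁿ → ℝ be continuous with u ≥ 0 in B_R(x₀) and satisfying u⁻(y) ≤ C̄(1 + |y − x₀|^{2s−δ}) for all y ∈ ℝⁿ, for some C̄ > 0 and δ ∈ (0, 2s). Let S be a subset of B_R(x₀) with d₀ := dist(S, ∂B_R(x₀)) > 0. Then there exists a constant C̃ > 0, depending only on n, s, Λ, R and C̄, such that for every x ∈ S, the integral ∫_{ℝⁿ} u⁻(x+y) |y|^{−n−2s} a(y/|y|) dy (which equals −L u⁻(x)) is at most C̃ (d₀^{−2s} + d₀^{−δ}). -/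

import Mathlib

open MeasureTheory Filter Metric Set Real
open scoped Topology ENNReal

noncomputable section

lemma tail_bound (n : ℕ) (p : ℝ) (hp : 0 < p) :
    ∃ c : ℝ, 0 ≤ c ∧ ∀ d : ℝ, 0 < d →
      (∫⁻ y : EuclideanSpace ℝ (Fin n),
          ({y : EuclideanSpace ℝ (Fin n) | d ≤ ‖y‖}.indicator
            (fun y => ENNReal.ofReal (‖y‖ ^ (-(n : ℝ) - p))) y))
        ≤ ENNReal.ofReal (c * d ^ (-p)) := by
  classical
  set e : ℝ := -(n : ℝ) - p with he
  have hen : e ≤ 0 := by rw [he]; have := n.cast_nonneg (α := ℝ); linarith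
  have hmeas : Measurable (fun y : EuclideanSpace ℝ (Fin n) => ENNReal.ofReal (‖y‖ ^ e)) := by
    fun_prop
  have hset : ∀ d : ℝ, MeasurableSet {y : EuclideanSpace ℝ (Fin n) | d ≤ ‖y‖} := fun d =>
    measurableSet_le measurable_const measurable_norm
  set J : ℝ≥0∞ := ∫⁻ y : EuclideanSpace ℝ (Fin n),
      ({y : EuclideanSpace ℝ (Fin n) | 1 ≤ ‖y‖}.indicator
        (fun y => ENNReal.ofReal (‖y‖ ^ e)) y) with hJ
  have hJfin : J < ∞ := by
    have key : ∀ y : EuclideanSpace ℝ (Fin n),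
        ({y : EuclideanSpace ℝ (Fin n) | 1 ≤ ‖y‖}.indicator
          (fun y => ENNReal.ofReal (‖y‖ ^ e)) y)
        ≤ ENNReal.ofReal (2 ^ ((n : ℝ) + p)) *
            ENNReal.ofReal ((1 + ‖y‖) ^ (-((n : ℝ) + p))) := by
      intro y
      by_cases hy : y ∈ {y : EuclideanSpace ℝ (Fin n) | 1 ≤ ‖y‖}
      · rw [Set.indicator_of_mem hy, ← ENNReal.ofReal_mul (by positivity)]
        apply ENNReal.ofReal_le_ofReal
        have hy1 : (1 : ℝ) ≤ ‖y‖ := hy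
        have h0 : (0 : ℝ) < (1 + ‖y‖) / 2 := by positivity
        have h1 : (1 + ‖y‖) / 2 ≤ ‖y‖ := by linarith
        have h2 : ‖y‖ ^ e ≤ ((1 + ‖y‖) / 2) ^ e :=
          Real.rpow_le_rpow_of_nonpos h0 h1 hen
        have h3 : ((1 + ‖y‖) / 2) ^ e = (1 + ‖y‖) ^ e / 2 ^ e :=
          Real.div_rpow (by linarith) (by norm_num) e
        have h4 : (2 : ℝ) ^ e = (2 ^ ((n : ℝ) + p))⁻¹ := by
          rw [he, show -(n : ℝ) - p = -((n : ℝ) + p) by ring, Real.rpow_neg (by norm_num)]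
        have h5 : (1 + ‖y‖) ^ e = (1 + ‖y‖) ^ (-((n : ℝ) + p)) := by
          rw [he]; congr 1; ring
        calc ‖y‖ ^ e ≤ ((1 + ‖y‖) / 2) ^ e := h2
          _ = 2 ^ ((n : ℝ) + p) * (1 + ‖y‖) ^ (-((n : ℝ) + p)) := by
              rw [h3, h4, h5, div_eq_mul_inv, inv_inv, mul_comm]
      · rw [Set.indicator_of_notMem hy]; exact zero_le
    calc J ≤ ∫⁻ y : EuclideanSpace ℝ (Fin n),
          ENNReal.ofReal (2 ^ ((n : ℝ) + p)) *
            ENNReal.ofReal ((1 + ‖y‖) ^ (-((n : ℝ) + p))) := lintegral_mono key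
      _ = ENNReal.ofReal (2 ^ ((n : ℝ) + p)) *
            ∫⁻ y : EuclideanSpace ℝ (Fin n),
              ENNReal.ofReal ((1 + ‖y‖) ^ (-((n : ℝ) + p))) :=
          lintegral_const_mul' _ _ ENNReal.ofReal_ne_top
      _ < ∞ := ENNReal.mul_lt_top ENNReal.ofReal_lt_top
          (finite_integral_one_add_norm (by rw [finrank_euclideanSpace_fin]; linarith))
  refine ⟨J.toReal, ENNReal.toReal_nonneg, fun d hd => ?_⟩
  set f : EuclideanSpace ℝ (Fin n) → ℝ≥0∞ :=
    {y : EuclideanSpace ℝ (Fin n) | d ≤ ‖y‖}.indicator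
      (fun y => ENNReal.ofReal (‖y‖ ^ e)) with hf
  have hfmeas : Measurable f := hmeas.indicator (hset d)
  have h1 : (∫⁻ z : EuclideanSpace ℝ (Fin n), f (d • z))
      = ENNReal.ofReal |(d ^ Module.finrank ℝ (EuclideanSpace ℝ (Fin n)))|⁻¹ * ∫⁻ y, f y := by
    rw [← lintegral_map hfmeas (measurable_const_smul d),
      MeasureTheory.Measure.map_addHaar_smul volume (ne_of_gt hd), lintegral_smul_measure,
      abs_inv, smul_eq_mul]
  have h2 : ∀ z : EuclideanSpace ℝ (Fin n),
      f (d • z) = ENNReal.ofReal (d ^ e) *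
        ({z : EuclideanSpace ℝ (Fin n) | 1 ≤ ‖z‖}.indicator
          (fun z => ENNReal.ofReal (‖z‖ ^ e)) z) := by
    intro z
    have hnz : ‖d • z‖ = d * ‖z‖ := by
      rw [norm_smul, Real.norm_eq_abs, abs_of_pos hd]
    by_cases hz : z ∈ {z : EuclideanSpace ℝ (Fin n) | 1 ≤ ‖z‖}
    · have hz1 : (1 : ℝ) ≤ ‖z‖ := hz
      have hm : d • z ∈ {y : EuclideanSpace ℝ (Fin n) | d ≤ ‖y‖} := by
        simp only [Set.mem_setOf_eq, hnz]; nlinarith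
      rw [hf, Set.indicator_of_mem hm, Set.indicator_of_mem hz, hnz,
        Real.mul_rpow hd.le (norm_nonneg _), ENNReal.ofReal_mul (by positivity)]
    · have hz1 : ‖z‖ < 1 := by simpa [Set.mem_setOf_eq, not_le] using hz
      have hm : d • z ∉ {y : EuclideanSpace ℝ (Fin n) | d ≤ ‖y‖} := by
        simp only [Set.mem_setOf_eq, hnz, not_le]
        calc d * ‖z‖ < d * 1 := by
              exact mul_lt_mul_of_pos_left hz1 hd
          _ = d := mul_one d
      rw [hf, Set.indicator_of_notMem hm, Set.indicator_of_notMem hz, mul_zero]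
  simp_rw [h2] at h1
  rw [lintegral_const_mul' _ _ ENNReal.ofReal_ne_top, ← hJ] at h1
  have hdn : (0 : ℝ) < d ^ n := pow_pos hd n
  have habs : |(d ^ Module.finrank ℝ (EuclideanSpace ℝ (Fin n)))|⁻¹ = (d ^ n)⁻¹ := by
    rw [finrank_euclideanSpace_fin, abs_of_pos hdn]
  rw [habs] at h1
  have hr : ENNReal.ofReal (d ^ n) * (ENNReal.ofReal (d ^ n)⁻¹ * ∫⁻ y, f y) = ∫⁻ y, f y := by
    rw [← mul_assoc, ← ENNReal.ofReal_mul hdn.le, mul_inv_cancel₀ hdn.ne',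
      ENNReal.ofReal_one, one_mul]
  have hl : ENNReal.ofReal (d ^ n) * (ENNReal.ofReal (d ^ e) * J)
      = ENNReal.ofReal (d ^ (-p)) * J := by
    rw [← mul_assoc, ← ENNReal.ofReal_mul hdn.le]
    congr 2
    rw [← Real.rpow_natCast d n, ← Real.rpow_add hd, he]
    congr 1
    ring
  have key : (∫⁻ y, f y) = ENNReal.ofReal (d ^ (-p)) * J := by
    calc (∫⁻ y, f y) = ENNReal.ofReal (d ^ n) * (ENNReal.ofReal (d ^ n)⁻¹ * ∫⁻ y, f y) :=
          hr.symm
      _ = ENNReal.ofReal (d ^ n) * (ENNReal.ofReal (d ^ e) * J) := by rw [← h1]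
      _ = ENNReal.ofReal (d ^ (-p)) * J := hl
  rw [key]
  exact le_of_eq (by
    rw [ENNReal.ofReal_mul ENNReal.toReal_nonneg, ENNReal.ofReal_toReal hJfin.ne, mul_comm])

set_option maxHeartbeats 2000000 in
/-- **Lemma 2.2** (tail estimate for the negative part). The integral
`∫ u⁻(x+y) |y|^{-n-2s} a(y/|y|) dy` (which equals `-L u⁻(x)`) is estimated by
`C̃ (d₀^{-2s} + d₀^{-δ})`, with `C̃` depending only on `n, s, Λ, R, C̄` (and `δ`). -/
theorem tail_estimate_negative_part
    (n : ℕ) (hn : 1 ≤ n) (s : ℝ) (hs : s ∈ Set.Ioo (0 : ℝ) 1)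
    (Lam : ℝ) (R : ℝ) (hR : 0 < R)
    (Cbar : ℝ) (hCbar : 0 < Cbar) (δ : ℝ) (hδ : δ ∈ Set.Ioo 0 (2 * s)) :
    ∃ Ctilde > 0,
      ∀ a : EuclideanSpace ℝ (Fin n) → ℝ, Measurable a →
      (∀ θ : EuclideanSpace ℝ (Fin n), ‖θ‖ = 1 → 0 ≤ a θ ∧ a θ ≤ Lam) →
      ∀ x₀ : EuclideanSpace ℝ (Fin n), ∀ u : EuclideanSpace ℝ (Fin n) → ℝ,
        Continuous u →
        (∀ x ∈ ball x₀ R, 0 ≤ u x) →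
        (∀ y, max (-(u y)) 0 ≤ Cbar * (1 + ‖y - x₀‖ ^ (2 * s - δ))) →
        ∀ S : Set (EuclideanSpace ℝ (Fin n)), S ⊆ ball x₀ R →
        ∀ d₀ > (0 : ℝ), (∀ x ∈ S, ∀ z : EuclideanSpace ℝ (Fin n),
          dist z x₀ = R → d₀ ≤ dist x z) →
        ∀ x ∈ S,
          (∫⁻ y : EuclideanSpace ℝ (Fin n),
              ENNReal.ofReal (max (-(u (x + y))) 0 * ‖y‖ ^ (-(n : ℝ) - 2 * s) *
                a (‖y‖⁻¹ • y)))
            ≤ ENNReal.ofReal (Ctilde * (d₀ ^ (-(2 * s)) + d₀ ^ (-δ))) := by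
  obtain ⟨hs0, hs1⟩ := hs
  obtain ⟨hδ0, hδ2⟩ := hδ
  have hq0 : 0 < 2 * s - δ := by linarith
  have hq2 : 2 * s - δ ≤ 2 := by linarith
  obtain ⟨c1, hc1, hC1⟩ := tail_bound n (2 * s) (by linarith)
  obtain ⟨c2, hc2, hC2⟩ := tail_bound n δ hδ0
  set Λ' : ℝ := max Lam 0 with hΛ'
  have hΛ0 : 0 ≤ Λ' := le_max_right _ _
  set K1 : ℝ := Λ' * Cbar * (1 + 4 * R ^ (2 * s - δ)) with hK1def
  set K2 : ℝ := Λ' * Cbar * 4 with hK2def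
  have hK1 : 0 ≤ K1 := by
    have : (0:ℝ) ≤ R ^ (2 * s - δ) := Real.rpow_nonneg hR.le _
    positivity
  have hK2 : 0 ≤ K2 := by positivity
  refine ⟨K1 * c1 + K2 * c2 + 1, by positivity, ?_⟩
  intro a ha haΛ x₀ u hu hupos hugrow S hS d₀ hd₀ hdist x hxS
  have hxball : x ∈ ball x₀ R := hS hxS
  -- points within distance d₀ of x stay in the ball
  have hball : ∀ y : EuclideanSpace ℝ (Fin n), ‖y‖ < d₀ → x + y ∈ ball x₀ R := by
    intro y hy
    by_contra hcon
    have hR1 : R ≤ dist (x + y) x₀ := not_lt.mp (by simpa [mem_ball] using hcon)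
    have hcont : Continuous fun t : ℝ => dist (x + t • y) x₀ :=
      (continuous_const.add ((continuous_id.smul continuous_const))).dist continuous_const
    have h0 : dist (x + (0 : ℝ) • y) x₀ < R := by
      simpa using (mem_ball.mp hxball)
    have h1 : R ≤ dist (x + (1 : ℝ) • y) x₀ := by simpa using hR1
    have hIVT := intermediate_value_Icc (zero_le_one (α := ℝ)) hcont.continuousOn
    have hmem : R ∈ Icc (dist (x + (0:ℝ) • y) x₀) (dist (x + (1:ℝ) • y) x₀) := ⟨h0.le, h1⟩
    obtain ⟨t, ht, hteq⟩ := hIVT hmem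
    have hzd : d₀ ≤ dist x (x + t • y) := hdist x hxS _ hteq
    have : dist x (x + t • y) = |t| * ‖y‖ := by
      rw [dist_eq_norm]
      simp [norm_smul, Real.norm_eq_abs]
    rw [this] at hzd
    have habs : |t| ≤ 1 := abs_le.mpr ⟨by linarith [ht.1], ht.2⟩
    nlinarith [norm_nonneg y]
  -- pointwise bound
  set e1 : ℝ := -(n : ℝ) - 2 * s with he1
  set e2 : ℝ := -(n : ℝ) - δ with he2
  set G1 : EuclideanSpace ℝ (Fin n) → ℝ≥0∞ := fun y =>
    ENNReal.ofReal K1 * ({y : EuclideanSpace ℝ (Fin n) | d₀ ≤ ‖y‖}.indicator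
      (fun y => ENNReal.ofReal (‖y‖ ^ e1)) y) with hG1def
  set G2 : EuclideanSpace ℝ (Fin n) → ℝ≥0∞ := fun y =>
    ENNReal.ofReal K2 * ({y : EuclideanSpace ℝ (Fin n) | d₀ ≤ ‖y‖}.indicator
      (fun y => ENNReal.ofReal (‖y‖ ^ e2)) y) with hG2def
  have hsetmeas : MeasurableSet {y : EuclideanSpace ℝ (Fin n) | d₀ ≤ ‖y‖} :=
    measurableSet_le measurable_const measurable_norm
  have hG1meas : Measurable G1 :=
    measurable_const.mul ((by fun_prop :
      Measurable (fun y : EuclideanSpace ℝ (Fin n) => ENNReal.ofReal (‖y‖ ^ e1))).indicator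
        hsetmeas)
  have hpoint : ∀ y : EuclideanSpace ℝ (Fin n),
      ENNReal.ofReal (max (-(u (x + y))) 0 * ‖y‖ ^ e1 * a (‖y‖⁻¹ • y)) ≤ G1 y + G2 y := by
    intro y
    by_cases hy : y ∈ {y : EuclideanSpace ℝ (Fin n) | d₀ ≤ ‖y‖}
    · -- far region
      have hyd : d₀ ≤ ‖y‖ := hy
      have hr : (0 : ℝ) < ‖y‖ := lt_of_lt_of_le hd₀ hyd
      have hθ : ‖(‖y‖⁻¹ • y : EuclideanSpace ℝ (Fin n))‖ = 1 := by
        rw [norm_smul, Real.norm_eq_abs, abs_of_pos (inv_pos.mpr hr), inv_mul_cancel₀ hr.ne']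
      obtain ⟨haθ0, haθΛ⟩ := haΛ _ hθ
      have haθ : a (‖y‖⁻¹ • y) ≤ Λ' := le_trans haθΛ (le_max_left _ _)
      -- growth bound
      have hgrow := hugrow (x + y)
      have hm0 : 0 ≤ max (-(u (x + y))) 0 := le_max_right _ _
      have hnorm : ‖x + y - x₀‖ ≤ R + ‖y‖ := by
        have : x + y - x₀ = (x - x₀) + y := by abel
        rw [this]
        calc ‖(x - x₀) + y‖ ≤ ‖x - x₀‖ + ‖y‖ := norm_add_le _ _
          _ ≤ R + ‖y‖ := by
              have := mem_ball.mp hxball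
              rw [dist_eq_norm] at this
              linarith
      have hpow : ‖x + y - x₀‖ ^ (2 * s - δ) ≤ 4 * R ^ (2 * s - δ) + 4 * ‖y‖ ^ (2 * s - δ) := by
        have h1 : ‖x + y - x₀‖ ^ (2 * s - δ) ≤ (R + ‖y‖) ^ (2 * s - δ) :=
          Real.rpow_le_rpow (norm_nonneg _) hnorm hq0.le
        have h2 : R + ‖y‖ ≤ 2 * max R ‖y‖ := by
          have := le_max_left R ‖y‖
          have := le_max_right R ‖y‖
          linarith
        have hmax0 : (0:ℝ) ≤ max R ‖y‖ := le_trans hR.le (le_max_left _ _)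
        have h3 : (R + ‖y‖) ^ (2 * s - δ) ≤ (2 * max R ‖y‖) ^ (2 * s - δ) :=
          Real.rpow_le_rpow (by positivity) h2 hq0.le
        have h4 : (2 * max R ‖y‖) ^ (2 * s - δ)
            = 2 ^ (2 * s - δ) * (max R ‖y‖) ^ (2 * s - δ) :=
          Real.mul_rpow (by norm_num) hmax0
        have h5 : (2:ℝ) ^ (2 * s - δ) ≤ 4 := by
          have : (2:ℝ) ^ (2 * s - δ) ≤ 2 ^ (2:ℝ) :=
            Real.rpow_le_rpow_of_exponent_le one_le_two hq2
          have h22 : (2:ℝ) ^ (2:ℝ) = 4 := by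
            rw [show (2:ℝ) = ((2:ℕ) : ℝ) by norm_num, Real.rpow_natCast]
            norm_num
          linarith
        have h6 : (max R ‖y‖) ^ (2 * s - δ) ≤ R ^ (2 * s - δ) + ‖y‖ ^ (2 * s - δ) := by
          rcases max_cases R ‖y‖ with ⟨hm, _⟩ | ⟨hm, _⟩ <;> rw [hm]
          · have : (0:ℝ) ≤ ‖y‖ ^ (2 * s - δ) := Real.rpow_nonneg (norm_nonneg _) _
            linarith
          · have : (0:ℝ) ≤ R ^ (2 * s - δ) := Real.rpow_nonneg hR.le _
            linarith
        have hmaxpow : (0:ℝ) ≤ (max R ‖y‖) ^ (2 * s - δ) := Real.rpow_nonneg hmax0 _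
        calc ‖x + y - x₀‖ ^ (2 * s - δ) ≤ (2 * max R ‖y‖) ^ (2 * s - δ) := le_trans h1 h3
          _ = 2 ^ (2 * s - δ) * (max R ‖y‖) ^ (2 * s - δ) := h4
          _ ≤ 4 * (R ^ (2 * s - δ) + ‖y‖ ^ (2 * s - δ)) := by nlinarith
          _ = 4 * R ^ (2 * s - δ) + 4 * ‖y‖ ^ (2 * s - δ) := by ring
      have he1pos : (0:ℝ) ≤ ‖y‖ ^ e1 := Real.rpow_nonneg (norm_nonneg _) _
      have hmul : ‖y‖ ^ (2 * s - δ) * ‖y‖ ^ e1 = ‖y‖ ^ e2 := by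
        rw [← Real.rpow_add hr, he1, he2]
        congr 1
        ring
      have hreal : max (-(u (x + y))) 0 * ‖y‖ ^ e1 * a (‖y‖⁻¹ • y)
          ≤ K1 * ‖y‖ ^ e1 + K2 * ‖y‖ ^ e2 := by
        have step1 : max (-(u (x + y))) 0 * ‖y‖ ^ e1 * a (‖y‖⁻¹ • y)
            ≤ (Cbar * (1 + ‖x + y - x₀‖ ^ (2 * s - δ))) * ‖y‖ ^ e1 * Λ' := by
          have hb1 : max (-(u (x + y))) 0 * ‖y‖ ^ e1
              ≤ (Cbar * (1 + ‖x + y - x₀‖ ^ (2 * s - δ))) * ‖y‖ ^ e1 :=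
            mul_le_mul_of_nonneg_right hgrow he1pos
          calc max (-(u (x + y))) 0 * ‖y‖ ^ e1 * a (‖y‖⁻¹ • y)
              ≤ max (-(u (x + y))) 0 * ‖y‖ ^ e1 * Λ' :=
                mul_le_mul_of_nonneg_left haθ (by positivity)
            _ ≤ (Cbar * (1 + ‖x + y - x₀‖ ^ (2 * s - δ))) * ‖y‖ ^ e1 * Λ' :=
                mul_le_mul_of_nonneg_right hb1 hΛ0
        have step2 : (Cbar * (1 + ‖x + y - x₀‖ ^ (2 * s - δ))) * ‖y‖ ^ e1 * Λ'
            ≤ (Cbar * (1 + (4 * R ^ (2 * s - δ) + 4 * ‖y‖ ^ (2 * s - δ)))) * ‖y‖ ^ e1 * Λ' := by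
          have : Cbar * (1 + ‖x + y - x₀‖ ^ (2 * s - δ))
              ≤ Cbar * (1 + (4 * R ^ (2 * s - δ) + 4 * ‖y‖ ^ (2 * s - δ))) := by
            apply mul_le_mul_of_nonneg_left _ hCbar.le
            linarith
          exact mul_le_mul_of_nonneg_right
            (mul_le_mul_of_nonneg_right this he1pos) hΛ0
        have step3 : (Cbar * (1 + (4 * R ^ (2 * s - δ) + 4 * ‖y‖ ^ (2 * s - δ)))) * ‖y‖ ^ e1 * Λ'
            = K1 * ‖y‖ ^ e1 + K2 * (‖y‖ ^ (2 * s - δ) * ‖y‖ ^ e1) := by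
          rw [hK1def, hK2def]; ring
        rw [hmul] at step3
        linarith
      calc ENNReal.ofReal (max (-(u (x + y))) 0 * ‖y‖ ^ e1 * a (‖y‖⁻¹ • y))
          ≤ ENNReal.ofReal (K1 * ‖y‖ ^ e1 + K2 * ‖y‖ ^ e2) := ENNReal.ofReal_le_ofReal hreal
        _ = ENNReal.ofReal (K1 * ‖y‖ ^ e1) + ENNReal.ofReal (K2 * ‖y‖ ^ e2) :=
            ENNReal.ofReal_add (by positivity) (by
              have : (0:ℝ) ≤ ‖y‖ ^ e2 := Real.rpow_nonneg (norm_nonneg _) _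
              positivity)
        _ = G1 y + G2 y := by
            rw [hG1def, hG2def]
            simp only [Set.indicator_of_mem hy]
            rw [← ENNReal.ofReal_mul hK1, ← ENNReal.ofReal_mul hK2]
    · -- near region: u ≥ 0 there
      have hyd : ‖y‖ < d₀ := by simpa [Set.mem_setOf_eq, not_le] using hy
      have hu0 : 0 ≤ u (x + y) := hupos _ (hball y hyd)
      have hmax : max (-(u (x + y))) 0 = 0 := max_eq_right (neg_nonpos.mpr hu0)
      rw [hmax, zero_mul, zero_mul, ENNReal.ofReal_zero]
      exact zero_le
  -- put everything together
  calc (∫⁻ y : EuclideanSpace ℝ (Fin n),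
        ENNReal.ofReal (max (-(u (x + y))) 0 * ‖y‖ ^ (-(n : ℝ) - 2 * s) * a (‖y‖⁻¹ • y)))
      ≤ ∫⁻ y, (G1 y + G2 y) := lintegral_mono hpoint
    _ = (∫⁻ y, G1 y) + ∫⁻ y, G2 y := lintegral_add_left hG1meas _
    _ = ENNReal.ofReal K1 * (∫⁻ y : EuclideanSpace ℝ (Fin n),
          ({y : EuclideanSpace ℝ (Fin n) | d₀ ≤ ‖y‖}.indicator
            (fun y => ENNReal.ofReal (‖y‖ ^ e1)) y))
        + ENNReal.ofReal K2 * (∫⁻ y : EuclideanSpace ℝ (Fin n),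
          ({y : EuclideanSpace ℝ (Fin n) | d₀ ≤ ‖y‖}.indicator
            (fun y => ENNReal.ofReal (‖y‖ ^ e2)) y)) := by
        rw [hG1def, hG2def, lintegral_const_mul' _ _ ENNReal.ofReal_ne_top,
          lintegral_const_mul' _ _ ENNReal.ofReal_ne_top]
    _ ≤ ENNReal.ofReal K1 * ENNReal.ofReal (c1 * d₀ ^ (-(2 * s)))
        + ENNReal.ofReal K2 * ENNReal.ofReal (c2 * d₀ ^ (-δ)) := by
        gcongr
        · exact hC1 d₀ hd₀
        · exact hC2 d₀ hd₀
    _ = ENNReal.ofReal (K1 * (c1 * d₀ ^ (-(2 * s))))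
        + ENNReal.ofReal (K2 * (c2 * d₀ ^ (-δ))) := by
        rw [← ENNReal.ofReal_mul hK1, ← ENNReal.ofReal_mul hK2]
    _ ≤ ENNReal.ofReal ((K1 * c1 + K2 * c2 + 1) * (d₀ ^ (-(2 * s)) + d₀ ^ (-δ))) := by
        rw [← ENNReal.ofReal_add (by positivity) (by positivity)]
        apply ENNReal.ofReal_le_ofReal
        have hp1 : (0:ℝ) ≤ d₀ ^ (-(2 * s)) := Real.rpow_nonneg hd₀.le _
        have hp2 : (0:ℝ) ≤ d₀ ^ (-δ) := Real.rpow_nonneg hd₀.le _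
        nlinarith [mul_nonneg hK2 hc2, mul_nonneg hK1 hc1,
          mul_nonneg (mul_nonneg hK1 hc1) hp2, mul_nonneg (mul_nonneg hK2 hc2) hp1]
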